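/- arXiv:2311.07077 — 4 statements merged into one kernel-verified Lean document; each statement's English description precedes it below -/
import Mathlib

section
/- The output-enlarging embedding E_k preserves locality and no-signaling, and leaves the standard and generalized robustness unchanged: R_S(E_k(P)) = R_S(P) and R_G(E_k(P)) = R_G(P) for every no-signaling behavior P. -/
open Finset

def IsLocal {A B : Type*} [Fintype A] [Fintype B] [DecidableEq A] [DecidableEq B]
    (p : Fin 2 → Fin 2 → A → B → ℝ) : Prop :=
  ∃ l : (Fin 2 → A) → (Fin 2 → B) → ℝ,
    (∀ f g, 0 ≤ l f g) ∧ (∑ f, ∑ g, l f g) = 1 ∧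
    ∀ x y a b, p x y a b = ∑ f, ∑ g, if f x = a ∧ g y = b then l f g else 0

def NoSignaling {A B : Type*} [Fintype A] [Fintype B]
    (p : Fin 2 → Fin 2 → A → B → ℝ) : Prop :=
  (∀ (x : Fin 2) (a : A) (y y' : Fin 2), ∑ b, p x y a b = ∑ b, p x y' a b) ∧
  (∀ (y : Fin 2) (b : B) (x x' : Fin 2), ∑ a, p x y a b = ∑ a, p x' y a b)

def IsBehavior {A B : Type*} [Fintype A] [Fintype B]
    (p : Fin 2 → Fin 2 → A → B → ℝ) : Prop :=
  (∀ x y a b, 0 ≤ p x y a b) ∧ ∀ x y, ∑ a, ∑ b, p x y a b = 1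

/-- Standard robustness, defined in each scenario relative to its own local set. -/
noncomputable def RS {A B : Type*} [Fintype A] [Fintype B] [DecidableEq A] [DecidableEq B]
    (P : Fin 2 → Fin 2 → A → B → ℝ) : ℝ :=
  sInf {r : ℝ | 0 ≤ r ∧ ∃ Q : Fin 2 → Fin 2 → A → B → ℝ, IsLocal Q ∧
    IsLocal (fun x y a b => (1 + r)⁻¹ * (P x y a b + r * Q x y a b))}

/-- Generalized robustness, defined in each scenario relative to its own local
and no-signaling sets. -/
noncomputable def RG {A B : Type*} [Fintype A] [Fintype B] [DecidableEq A] [DecidableEq B]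
    (P : Fin 2 → Fin 2 → A → B → ℝ) : ℝ :=
  sInf {r : ℝ | 0 ≤ r ∧ ∃ Q : Fin 2 → Fin 2 → A → B → ℝ,
    IsBehavior Q ∧ NoSignaling Q ∧
    IsLocal (fun x y a b => (1 + r)⁻¹ * (P x y a b + r * Q x y a b))}

/-- The output-enlarging embedding `E_k`: from outcome sizes `(mA, mB)` to
`(mA + k, mB + k)`, assigning probability 0 to added outcomes. -/
def EmbedK (mA mB k : ℕ) (p : Fin 2 → Fin 2 → Fin mA → Fin mB → ℝ) :
    Fin 2 → Fin 2 → Fin (mA + k) → Fin (mB + k) → ℝ :=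
  fun x y a b =>
    if h : a.val < mA ∧ b.val < mB then p x y ⟨a.val, h.1⟩ ⟨b.val, h.2⟩ else 0

def emb {m : ℕ} (k : ℕ) (a : Fin m) : Fin (m + k) := ⟨a.val, Nat.lt_add_right k a.isLt⟩

def del0 {m k : ℕ} (hm : 0 < m) (a : Fin (m + k)) : Fin m :=
  if h : a.val < m then ⟨a.val, h⟩ else ⟨0, hm⟩

lemma emb_inj {m k : ℕ} : Function.Injective (emb (m := m) k) := by
  intro a b h
  simpa [emb, Fin.ext_iff] using h

lemma del0_emb {m k : ℕ} (hm : 0 < m) (a : Fin m) : del0 hm (emb k a) = a := by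
  simp [del0, emb, a.isLt]

lemma sum_large {m k : ℕ} (F : Fin (m + k) → ℝ) (h0 : ∀ a : Fin (m + k), ¬ a.val < m → F a = 0) :
    ∑ a, F a = ∑ a : Fin m, F (emb k a) := by
  rw [Fin.sum_univ_add]
  have h1 : ∀ i : Fin k, F (Fin.natAdd m i) = 0 := fun i => h0 _ (by simp [Fin.natAdd])
  simp only [h1, Finset.sum_const_zero, add_zero]
  apply Finset.sum_congr rfl
  intro a _
  congr 1

lemma sum_large_fun {m k : ℕ} (F : (Fin 2 → Fin (m + k)) → ℝ)
    (h0 : ∀ f, ¬ (∀ x, (f x).val < m) → F f = 0) :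
    ∑ f, F f = ∑ f : Fin 2 → Fin m, F (fun x => emb k (f x)) := by
  classical
  have hinj : ∀ f ∈ (Finset.univ : Finset (Fin 2 → Fin m)), ∀ g ∈ Finset.univ,
      (fun x => emb k (f x)) = (fun x => emb k (g x)) → f = g := by
    intro f _ g _ hfg
    funext x
    exact emb_inj (congrFun hfg x)
  rw [show (∑ f : Fin 2 → Fin m, F (fun x => emb k (f x)))
      = ∑ f' ∈ Finset.univ.image (fun (f : Fin 2 → Fin m) => (fun x => emb k (f x))), F f'
      from (Finset.sum_image hinj).symm]
  symm
  apply Finset.sum_subset (Finset.subset_univ _)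
  intro f' _ hf'
  apply h0
  intro hall
  apply hf'
  exact Finset.mem_image.mpr ⟨fun x => ⟨(f' x).val, hall x⟩, Finset.mem_univ _, by
    funext x; simp [emb]⟩

lemma embed_local {mA mB k : ℕ} {p : Fin 2 → Fin 2 → Fin mA → Fin mB → ℝ}
    (h : IsLocal p) : IsLocal (EmbedK mA mB k p) := by
  obtain ⟨l, hl0, hl1, hlp⟩ := h
  classical
  refine ⟨fun f g => if h : (∀ x, (f x).val < mA) ∧ (∀ y, (g y).val < mB)
      then l (fun x => ⟨(f x).val, h.1 x⟩) (fun y => ⟨(g y).val, h.2 y⟩) else 0, ?_, ?_, ?_⟩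
  · intro f g
    dsimp only
    split
    · apply hl0
    · exact le_refl 0
  · dsimp only
    rw [sum_large_fun]
    · have h2 : ∀ f : Fin 2 → Fin mA,
          (∑ g' : Fin 2 → Fin (mB + k),
            if h : (∀ x, ((fun x => emb k (f x)) x).val < mA) ∧ (∀ y, (g' y).val < mB)
            then l (fun x => ⟨((fun x => emb k (f x)) x).val, h.1 x⟩) (fun y => ⟨(g' y).val, h.2 y⟩)
            else 0) = ∑ g : Fin 2 → Fin mB, l f g := by
        intro f
        rw [sum_large_fun]
        · apply Finset.sum_congr rfl
          intro g _
          rw [dif_pos ⟨fun x => (f x).isLt, fun y => (g y).isLt⟩]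
          congr 1
        · intro g' hg'
          rw [dif_neg]
          intro hc
          exact hg' hc.2
      rw [Finset.sum_congr rfl fun f _ => h2 f]
      exact hl1
    · intro f' hf'
      apply Finset.sum_eq_zero
      intro g' _
      rw [dif_neg]
      intro hc
      exact hf' hc.1
  · intro x y a b
    dsimp only
    by_cases hab : a.val < mA ∧ b.val < mB
    · rw [show EmbedK mA mB k p x y a b = p x y ⟨a.val, hab.1⟩ ⟨b.val, hab.2⟩ from dif_pos hab,
        hlp]
      rw [sum_large_fun]
      · apply Finset.sum_congr rfl
        intro f _
        rw [sum_large_fun]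
        · apply Finset.sum_congr rfl
          intro g _
          have hc1 : (emb k (f x) = a) ↔ (f x = ⟨a.val, hab.1⟩) := by
            simp [emb, Fin.ext_iff]
          have hc2 : (emb k (g y) = b) ↔ (g y = ⟨b.val, hab.2⟩) := by
            simp [emb, Fin.ext_iff]
          rw [if_congr (and_congr hc1 hc2) rfl rfl]
          congr 1
          rw [dif_pos ⟨fun x => (f x).isLt, fun y => (g y).isLt⟩]
          congr 1
        · intro g' hg'
          split_ifs with hfg hall
          · exact absurd hall.2 hg'
          · rfl
          · rfl
      · intro f' hf'
        apply Finset.sum_eq_zero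
        intro g' _
        split_ifs with hfg hall
        · exact absurd hall.1 hf'
        · rfl
        · rfl
    · rw [show EmbedK mA mB k p x y a b = 0 from dif_neg hab]
      symm
      apply Finset.sum_eq_zero
      intro f' _
      apply Finset.sum_eq_zero
      intro g' _
      split_ifs with hfg hall
      · exact absurd ⟨hfg.1 ▸ hall.1 x, hfg.2 ▸ hall.2 y⟩ hab
      · rfl
      · rfl
lemma EmbedK_sumB {mA mB k : ℕ} (p : Fin 2 → Fin 2 → Fin mA → Fin mB → ℝ) (x y a) :
    ∑ b, EmbedK mA mB k p x y a b
      = if h : a.val < mA then ∑ b, p x y ⟨a.val, h⟩ b else 0 := by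
  split_ifs with h
  · rw [sum_large]
    · apply Finset.sum_congr rfl
      intro b _
      simp [EmbedK, emb, h, b.isLt]
    · intro b hb
      rw [EmbedK, dif_neg]
      intro hc
      exact hb hc.2
  · apply Finset.sum_eq_zero
    intro b _
    rw [EmbedK, dif_neg]
    intro hc
    exact h hc.1

lemma EmbedK_sumA {mA mB k : ℕ} (p : Fin 2 → Fin 2 → Fin mA → Fin mB → ℝ) (x y b) :
    ∑ a, EmbedK mA mB k p x y a b
      = if h : b.val < mB then ∑ a, p x y a ⟨b.val, h⟩ else 0 := by
  split_ifs with h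
  · rw [sum_large]
    · apply Finset.sum_congr rfl
      intro a _
      simp [EmbedK, emb, h, a.isLt]
    · intro a ha
      rw [EmbedK, dif_neg]
      intro hc
      exact ha hc.1
  · apply Finset.sum_eq_zero
    intro a _
    rw [EmbedK, dif_neg]
    intro hc
    exact h hc.2

lemma embed_NS {mA mB k : ℕ} {p : Fin 2 → Fin 2 → Fin mA → Fin mB → ℝ}
    (h : NoSignaling p) : NoSignaling (EmbedK mA mB k p) := by
  constructor
  · intro x a y y'
    rw [EmbedK_sumB, EmbedK_sumB]
    split_ifs with ha
    · exact h.1 x _ y y'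
    · rfl
  · intro y b x x'
    rw [EmbedK_sumA, EmbedK_sumA]
    split_ifs with hb
    · exact h.2 y _ x x'
    · rfl

lemma embed_behavior {mA mB k : ℕ} {p : Fin 2 → Fin 2 → Fin mA → Fin mB → ℝ}
    (h : IsBehavior p) : IsBehavior (EmbedK mA mB k p) := by
  constructor
  · intro x y a b
    rw [EmbedK]
    split
    · exact h.1 x y _ _
    · exact le_refl 0
  · intro x y
    have : ∀ a : Fin (mA + k), ∑ b, EmbedK mA mB k p x y a b
        = if h : a.val < mA then ∑ b, p x y ⟨a.val, h⟩ b else 0 := EmbedK_sumB p x y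
    rw [Finset.sum_congr rfl fun a _ => this a]
    rw [sum_large]
    · rw [← h.2 x y]
      apply Finset.sum_congr rfl
      intro a _
      simp [emb, a.isLt]
    · intro a ha
      rw [dif_neg]
      intro hc
      simp [emb] at ha
      omega

lemma EmbedK_mix {mA mB k : ℕ} (c r : ℝ) (p q : Fin 2 → Fin 2 → Fin mA → Fin mB → ℝ) :
    (fun x y a b => c * (EmbedK mA mB k p x y a b + r * EmbedK mA mB k q x y a b))
      = EmbedK mA mB k (fun x y a b => c * (p x y a b + r * q x y a b)) := by
  funext x y a b
  simp only [EmbedK]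
  split
  · rfl
  · ring
lemma sum_fiber' {α β : Type*} [Fintype α] [DecidableEq β] [Fintype β]
    (π : α → β) (F : α → ℝ) :
    ∑ b, ∑ a, (if π a = b then F a else 0) = ∑ a, F a := by
  rw [Finset.sum_comm]; simp

lemma sum4_comm {α β γ δ : Type*} [Fintype α] [Fintype β] [Fintype γ] [Fintype δ]
    (F : α → β → γ → δ → ℝ) :
    ∑ a, ∑ b, ∑ c, ∑ d, F a b c d = ∑ c, ∑ d, ∑ a, ∑ b, F a b c d := by
  calc ∑ a, ∑ b, ∑ c, ∑ d, F a b c d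
      = ∑ a, ∑ c, ∑ b, ∑ d, F a b c d := Finset.sum_congr rfl fun a _ => Finset.sum_comm
    _ = ∑ c, ∑ a, ∑ b, ∑ d, F a b c d := Finset.sum_comm
    _ = ∑ c, ∑ a, ∑ d, ∑ b, F a b c d :=
        Finset.sum_congr rfl fun c _ => Finset.sum_congr rfl fun a _ => Finset.sum_comm
    _ = ∑ c, ∑ d, ∑ a, ∑ b, F a b c d := Finset.sum_congr rfl fun c _ => Finset.sum_comm

lemma sum_fiber2 {α β γ δ : Type*} [Fintype α] [Fintype β] [Fintype γ] [Fintype δ]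
    [DecidableEq γ] [DecidableEq δ] (π : α → γ) (ρ : β → δ) (F : α → β → ℝ) :
    ∑ c, ∑ d, ∑ a, ∑ b, (if π a = c ∧ ρ b = d then F a b else 0) = ∑ a, ∑ b, F a b := by
  classical
  have key : ∀ c a, (∑ d, ∑ b, if π a = c ∧ ρ b = d then F a b else 0)
      = if π a = c then (∑ b, F a b) else 0 := by
    intro c a
    by_cases h : π a = c
    · simp only [h, true_and, if_true]
      exact sum_fiber' ρ (F a)
    · simp [h]
  calc ∑ c, ∑ d, ∑ a, ∑ b, (if π a = c ∧ ρ b = d then F a b else 0)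
      = ∑ c, ∑ a, ∑ d, ∑ b, (if π a = c ∧ ρ b = d then F a b else 0) :=
        Finset.sum_congr rfl fun c _ => Finset.sum_comm
    _ = ∑ c, ∑ a, if π a = c then (∑ b, F a b) else 0 :=
        Finset.sum_congr rfl fun c _ => Finset.sum_congr rfl fun a _ => key c a
    _ = ∑ a, ∑ b, F a b := sum_fiber' π _

lemma sum_pick {α β : Type*} [Fintype α] [Fintype β] [DecidableEq α] [DecidableEq β]
    (p : α → Prop) (q : β → Prop) [DecidablePred p] [DecidablePred q]
    (a0 : α) (b0 : β) (v : ℝ) :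
    ∑ a, ∑ b, (if (p a ∧ q b) ∧ (a0 = a ∧ b0 = b) then v else 0)
      = if p a0 ∧ q b0 then v else 0 := by
  have h : ∀ a b, (if (p a ∧ q b) ∧ (a0 = a ∧ b0 = b) then v else 0)
      = if a0 = a then (if b0 = b then (if p a ∧ q b then v else 0) else 0) else 0 := by
    intro a b
    split_ifs <;> first | rfl | tauto
  simp only [h]
  simp [Finset.sum_ite_eq]

lemma ite_sum {c : Prop} [Decidable c] {ι : Type*} (s : Finset ι) (F : ι → ℝ) :
    (if c then ∑ i ∈ s, F i else 0) = ∑ i ∈ s, if c then F i else 0 := by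
  split <;> simp

def Del {mA mB k : ℕ} (hA : 0 < mA) (hB : 0 < mB)
    (q : Fin 2 → Fin 2 → Fin (mA + k) → Fin (mB + k) → ℝ) :
    Fin 2 → Fin 2 → Fin mA → Fin mB → ℝ :=
  fun x y a b => ∑ a', ∑ b', if del0 hA a' = a ∧ del0 hB b' = b then q x y a' b' else 0

lemma Del_sumB {mA mB k : ℕ} (hA : 0 < mA) (hB : 0 < mB)
    (q : Fin 2 → Fin 2 → Fin (mA + k) → Fin (mB + k) → ℝ) (x y a) :
    ∑ b, Del hA hB q x y a b
      = ∑ a', if del0 hA a' = a then ∑ b', q x y a' b' else 0 := by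
  unfold Del
  rw [Finset.sum_comm]
  apply Finset.sum_congr rfl
  intro a' _
  by_cases h : del0 hA a' = a
  · simp only [h, true_and, if_true]
    exact sum_fiber' (del0 hB) _
  · simp [h]

lemma Del_sumA {mA mB k : ℕ} (hA : 0 < mA) (hB : 0 < mB)
    (q : Fin 2 → Fin 2 → Fin (mA + k) → Fin (mB + k) → ℝ) (x y b) :
    ∑ a, Del hA hB q x y a b
      = ∑ b', if del0 hB b' = b then ∑ a', q x y a' b' else 0 := by
  unfold Del
  have swap : ∀ a : Fin mA, ∑ a' : Fin (mA + k), ∑ b' : Fin (mB + k),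
      (if del0 hA a' = a ∧ del0 hB b' = b then q x y a' b' else 0)
      = ∑ b', ∑ a', (if del0 hB b' = b ∧ del0 hA a' = a then q x y a' b' else 0) := by
    intro a
    rw [Finset.sum_comm]
    exact Finset.sum_congr rfl fun b' _ => Finset.sum_congr rfl fun a' _ => by
      rw [if_congr and_comm rfl rfl]
  rw [Finset.sum_congr rfl fun a _ => swap a]
  rw [Finset.sum_comm]
  apply Finset.sum_congr rfl
  intro b' _
  by_cases h : del0 hB b' = b
  · simp only [h, true_and, if_true]
    exact sum_fiber' (del0 hA) _
  · simp [h]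

lemma del_NS {mA mB k : ℕ} (hA : 0 < mA) (hB : 0 < mB)
    {q : Fin 2 → Fin 2 → Fin (mA + k) → Fin (mB + k) → ℝ}
    (h : NoSignaling q) : NoSignaling (Del hA hB q) := by
  constructor
  · intro x a y y'
    rw [Del_sumB, Del_sumB]
    exact Finset.sum_congr rfl fun a' _ => by rw [h.1 x a' y y']
  · intro y b x x'
    rw [Del_sumA, Del_sumA]
    exact Finset.sum_congr rfl fun b' _ => by rw [h.2 y b' x x']

lemma del_behavior {mA mB k : ℕ} (hA : 0 < mA) (hB : 0 < mB)
    {q : Fin 2 → Fin 2 → Fin (mA + k) → Fin (mB + k) → ℝ}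
    (h : IsBehavior q) : IsBehavior (Del hA hB q) := by
  constructor
  · intro x y a b
    apply Finset.sum_nonneg
    intro a' _
    apply Finset.sum_nonneg
    intro b' _
    split
    · exact h.1 x y a' b'
    · exact le_refl 0
  · intro x y
    rw [Finset.sum_congr rfl fun a (_ : a ∈ univ) => Del_sumB hA hB q x y a]
    rw [sum_fiber' (del0 hA) (fun a' => ∑ b', q x y a' b')]
    exact h.2 x y

lemma del_local {mA mB k : ℕ} (hA : 0 < mA) (hB : 0 < mB)
    {q : Fin 2 → Fin 2 → Fin (mA + k) → Fin (mB + k) → ℝ}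
    (h : IsLocal q) : IsLocal (Del hA hB q) := by
  obtain ⟨l, hl0, hl1, hlq⟩ := h
  classical
  refine ⟨fun f g => ∑ f', ∑ g',
      if (fun x => del0 hA (f' x)) = f ∧ (fun y => del0 hB (g' y)) = g then l f' g' else 0,
      ?_, ?_, ?_⟩
  · intro f g
    apply Finset.sum_nonneg
    intro f' _
    apply Finset.sum_nonneg
    intro g' _
    split
    · exact hl0 f' g'
    · exact le_refl 0
  · dsimp only
    rw [sum_fiber2 (fun f' x => del0 hA (f' x)) (fun g' y => del0 hB (g' y)) l]
    exact hl1
  · intro x y a b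
    dsimp only
    have lhs : Del hA hB q x y a b
        = ∑ f', ∑ g', if del0 hA (f' x) = a ∧ del0 hB (g' y) = b then l f' g' else 0 := by
      unfold Del
      calc ∑ a', ∑ b', (if del0 hA a' = a ∧ del0 hB b' = b then q x y a' b' else 0)
          = ∑ a', ∑ b', ∑ f', ∑ g',
              (if (del0 hA a' = a ∧ del0 hB b' = b) ∧ (f' x = a' ∧ g' y = b')
               then l f' g' else 0) := by
            apply Finset.sum_congr rfl; intro a' _
            apply Finset.sum_congr rfl; intro b' _
            rw [hlq x y a' b', ite_sum, Finset.sum_congr rfl fun f' (_ : f' ∈ univ) => ite_sum _ _]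
            apply Finset.sum_congr rfl; intro f' _
            apply Finset.sum_congr rfl; intro g' _
            rw [← ite_and]
        _ = ∑ f', ∑ g', ∑ a', ∑ b',
              (if (del0 hA a' = a ∧ del0 hB b' = b) ∧ (f' x = a' ∧ g' y = b')
               then l f' g' else 0) := sum4_comm _
        _ = ∑ f', ∑ g', (if del0 hA (f' x) = a ∧ del0 hB (g' y) = b then l f' g' else 0) := by
            apply Finset.sum_congr rfl; intro f' _
            apply Finset.sum_congr rfl; intro g' _
            exact sum_pick (fun a' => del0 hA a' = a) (fun b' => del0 hB b' = b)
              (f' x) (g' y) (l f' g')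
    rw [lhs]
    symm
    calc ∑ f, ∑ g, (if f x = a ∧ g y = b then
            (∑ f', ∑ g', if (fun x => del0 hA (f' x)) = f ∧ (fun y => del0 hB (g' y)) = g
             then l f' g' else 0) else 0)
        = ∑ f, ∑ g, ∑ f', ∑ g',
            (if (f x = a ∧ g y = b) ∧
              ((fun x => del0 hA (f' x)) = f ∧ (fun y => del0 hB (g' y)) = g)
             then l f' g' else 0) := by
          apply Finset.sum_congr rfl; intro f _
          apply Finset.sum_congr rfl; intro g _
          rw [ite_sum, Finset.sum_congr rfl fun f' (_ : f' ∈ univ) => ite_sum _ _]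
          apply Finset.sum_congr rfl; intro f' _
          apply Finset.sum_congr rfl; intro g' _
          rw [← ite_and]
      _ = ∑ f', ∑ g', ∑ f, ∑ g,
            (if (f x = a ∧ g y = b) ∧
              ((fun x => del0 hA (f' x)) = f ∧ (fun y => del0 hB (g' y)) = g)
             then l f' g' else 0) := sum4_comm _
      _ = ∑ f', ∑ g', (if del0 hA (f' x) = a ∧ del0 hB (g' y) = b then l f' g' else 0) := by
          apply Finset.sum_congr rfl; intro f' _
          apply Finset.sum_congr rfl; intro g' _
          exact sum_pick (fun f => f x = a) (fun g => g y = b)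
            (fun x => del0 hA (f' x)) (fun y => del0 hB (g' y)) (l f' g')

lemma Del_EmbedK {mA mB k : ℕ} (hA : 0 < mA) (hB : 0 < mB)
    (p : Fin 2 → Fin 2 → Fin mA → Fin mB → ℝ) :
    Del hA hB (EmbedK mA mB k p) = p := by
  funext x y a b
  unfold Del
  rw [sum_large]
  · have inner : ∀ a0 : Fin mA, ∑ b' : Fin (mB + k),
        (if del0 hA (emb k a0) = a ∧ del0 hB b' = b then EmbedK mA mB k p x y (emb k a0) b' else 0)
        = ∑ b0 : Fin mB, (if a0 = a ∧ b0 = b then p x y a0 b0 else 0) := by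
      intro a0
      rw [sum_large]
      · apply Finset.sum_congr rfl
        intro b0 _
        rw [del0_emb, del0_emb]
        congr 1
        simp [EmbedK, emb, a0.isLt, b0.isLt]
      · intro b' hb'
        split_ifs with hc
        · rw [EmbedK, dif_neg]
          intro hcc
          exact hb' hcc.2
        · rfl
    rw [Finset.sum_congr rfl fun a0 _ => inner a0]
    simp [ite_and, Finset.sum_ite_eq, Finset.sum_ite_eq']
  · intro a' ha'
    apply Finset.sum_eq_zero
    intro b' _
    split_ifs with hc
    · rw [EmbedK, dif_neg]
      intro hcc
      exact ha' hcc.1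
    · rfl

lemma Del_mix {mA mB k : ℕ} (hA : 0 < mA) (hB : 0 < mB) (c r : ℝ)
    (q1 q2 : Fin 2 → Fin 2 → Fin (mA + k) → Fin (mB + k) → ℝ) :
    (fun x y a b => c * (Del hA hB q1 x y a b + r * Del hA hB q2 x y a b))
      = Del hA hB (fun x y a b => c * (q1 x y a b + r * q2 x y a b)) := by
  funext x y a b
  unfold Del
  have expand : ∀ a' b', (if del0 hA a' = a ∧ del0 hB b' = b
        then c * (q1 x y a' b' + r * q2 x y a' b') else 0)
      = c * (if del0 hA a' = a ∧ del0 hB b' = b then q1 x y a' b' else 0)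
          + c * (r * (if del0 hA a' = a ∧ del0 hB b' = b then q2 x y a' b' else 0)) := by
    intro a' b'
    split_ifs <;> ring
  simp only [expand, Finset.sum_add_distrib, ← Finset.mul_sum]
  ring

/-- `E_k` preserves locality and no-signaling, and leaves the
standard and generalized robustness measures unchanged on no-signaling behaviors. -/
theorem embed_preserves_robustness (mA mB k : ℕ)
    (P : Fin 2 → Fin 2 → Fin mA → Fin mB → ℝ)
    (hP : IsBehavior P) (hNS : NoSignaling P) :
    (IsLocal P → IsLocal (EmbedK mA mB k P)) ∧
    NoSignaling (EmbedK mA mB k P) ∧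
    RS (EmbedK mA mB k P) = RS P ∧
    RG (EmbedK mA mB k P) = RG P := by
  have hApos : 0 < mA := by
    by_contra h
    have h0 : mA = 0 := by omega
    have h1 := hP.2 0 0
    subst h0
    simp at h1
  have hBpos : 0 < mB := by
    by_contra h
    have h0 : mB = 0 := by omega
    have h1 := hP.2 0 0
    subst h0
    simp at h1
  refine ⟨embed_local, embed_NS hNS, ?_, ?_⟩
  · unfold RS
    congr 1
    ext r
    simp only [Set.mem_setOf_eq]
    constructor
    · rintro ⟨hr, Q, hQ, hmix⟩
      refine ⟨hr, Del hApos hBpos Q, del_local hApos hBpos hQ, ?_⟩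
      have e1 : (fun x y a b => (1 + r)⁻¹ * (P x y a b + r * Del hApos hBpos Q x y a b))
          = Del hApos hBpos
            (fun x y a b => (1 + r)⁻¹ * (EmbedK mA mB k P x y a b + r * Q x y a b)) := by
        rw [← Del_mix, Del_EmbedK]
      rw [e1]
      exact del_local hApos hBpos hmix
    · rintro ⟨hr, Q, hQ, hmix⟩
      refine ⟨hr, EmbedK mA mB k Q, embed_local hQ, ?_⟩
      rw [EmbedK_mix]
      exact embed_local hmix
  · unfold RG
    congr 1
    ext r
    simp only [Set.mem_setOf_eq]
    constructor
    · rintro ⟨hr, Q, hQb, hQns, hmix⟩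
      refine ⟨hr, Del hApos hBpos Q, del_behavior hApos hBpos hQb, del_NS hApos hBpos hQns, ?_⟩
      have e1 : (fun x y a b => (1 + r)⁻¹ * (P x y a b + r * Del hApos hBpos Q x y a b))
          = Del hApos hBpos
            (fun x y a b => (1 + r)⁻¹ * (EmbedK mA mB k P x y a b + r * Q x y a b)) := by
        rw [← Del_mix, Del_EmbedK]
      rw [e1]
      exact del_local hApos hBpos hmix
    · rintro ⟨hr, Q, hQb, hQns, hmix⟩
      refine ⟨hr, EmbedK mA mB k Q, embed_behavior hQb, embed_NS hQns, ?_⟩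
      rw [EmbedK_mix]
      exact embed_local hmix
end

section
/- (LP reformulation of generalized robustness) For a no-signaling behavior P, 1 + R_G(P) = (1/4) · min { uᵀ P' : P' ∈ Cone(L), P' − P ≥ 0 componentwise }, where u is the all-ones vector in R^(4 m_A m_B). -/
open Finset

/-- Membership in the cone generated by the local polytope. -/
def InConeL {A B : Type*} [Fintype A] [Fintype B] [DecidableEq A] [DecidableEq B]
    (P' : Fin 2 → Fin 2 → A → B → ℝ) : Prop :=
  ∃ (r : ℝ) (Q : Fin 2 → Fin 2 → A → B → ℝ), 0 ≤ r ∧ IsLocal Q ∧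
    P' = fun x y a b => r * Q x y a b

/- ### Auxiliary lemmas -/

lemma count_fin2 {α : Type*} [Fintype α] [DecidableEq α] (x : Fin 2) (a : α) (w : ℝ) :
    ∑ f : Fin 2 → α, (if f x = a then w else 0) = (Fintype.card α : ℝ) * w := by
  rw [← Equiv.sum_comp (finTwoArrowEquiv α).symm]
  fin_cases x
  · simp [finTwoArrowEquiv, Fintype.sum_prod_type_right, Finset.sum_ite_eq,
      Finset.sum_const, Finset.card_univ, nsmul_eq_mul]
  · simp [finTwoArrowEquiv, Fintype.sum_prod_type, Finset.sum_ite_eq,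
      Finset.sum_const, Finset.card_univ, nsmul_eq_mul]

section Aux

variable {A B : Type*} [Fintype A] [Fintype B] [DecidableEq A] [DecidableEq B]

lemma local_marginalB {p : Fin 2 → Fin 2 → A → B → ℝ}
    {l : (Fin 2 → A) → (Fin 2 → B) → ℝ}
    (hlp : ∀ x y a b, p x y a b = ∑ f, ∑ g, if f x = a ∧ g y = b then l f g else 0)
    (x y : Fin 2) (a : A) :
    ∑ b, p x y a b = ∑ f, ∑ g, if f x = a then l f g else 0 := by
  simp only [hlp]
  rw [Finset.sum_comm]
  refine Finset.sum_congr rfl fun f _ => ?_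
  rw [Finset.sum_comm]
  refine Finset.sum_congr rfl fun g _ => ?_
  by_cases h : f x = a <;> simp [h, Finset.sum_ite_eq]

lemma local_marginalA {p : Fin 2 → Fin 2 → A → B → ℝ}
    {l : (Fin 2 → A) → (Fin 2 → B) → ℝ}
    (hlp : ∀ x y a b, p x y a b = ∑ f, ∑ g, if f x = a ∧ g y = b then l f g else 0)
    (x y : Fin 2) (b : B) :
    ∑ a, p x y a b = ∑ f, ∑ g, if g y = b then l f g else 0 := by
  simp only [hlp]
  rw [Finset.sum_comm]
  refine Finset.sum_congr rfl fun f _ => ?_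
  rw [Finset.sum_comm]
  refine Finset.sum_congr rfl fun g _ => ?_
  by_cases h : g y = b <;> simp [h, Finset.sum_ite_eq]

lemma IsLocal.isBehavior {p : Fin 2 → Fin 2 → A → B → ℝ} (hl : IsLocal p) :
    IsBehavior p := by
  obtain ⟨l, h0, h1, hlp⟩ := hl
  refine ⟨fun x y a b => ?_, fun x y => ?_⟩
  · rw [hlp]
    refine Finset.sum_nonneg fun f _ => Finset.sum_nonneg fun g _ => ?_
    by_cases h : f x = a ∧ g y = b <;> simp [h, h0 f g]
  · calc ∑ a, ∑ b, p x y a b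
        = ∑ a, ∑ f, ∑ g, (if f x = a then l f g else 0) :=
          Finset.sum_congr rfl fun a _ =>
            local_marginalB (fun x y a b => hlp x y a b) x y a
      _ = ∑ f, ∑ a, ∑ g, (if f x = a then l f g else 0) := Finset.sum_comm
      _ = ∑ f, ∑ g, ∑ a, (if f x = a then l f g else 0) :=
          Finset.sum_congr rfl fun f _ => Finset.sum_comm
      _ = ∑ f, ∑ g, l f g := by simp [Finset.sum_ite_eq]
      _ = 1 := h1

lemma IsLocal.noSignaling {p : Fin 2 → Fin 2 → A → B → ℝ} (hl : IsLocal p) :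
    NoSignaling p := by
  obtain ⟨l, _, _, hlp⟩ := hl
  constructor
  · intro x a y y'
    rw [local_marginalB hlp x y a, local_marginalB hlp x y' a]
  · intro y b x x'
    rw [local_marginalA hlp x y b, local_marginalA hlp x' y b]

lemma uniform_local [Nonempty A] [Nonempty B] :
    IsLocal (fun (_ : Fin 2) (_ : Fin 2) (_ : A) (_ : B) =>
      ((Fintype.card A : ℝ) * Fintype.card B)⁻¹) := by
  have hA : (0:ℝ) < Fintype.card A := by exact_mod_cast Fintype.card_pos
  have hB : (0:ℝ) < Fintype.card B := by exact_mod_cast Fintype.card_pos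
  set c : ℝ := (((Fintype.card A : ℝ) * Fintype.card B)^2)⁻¹ with hc
  refine ⟨fun _ _ => c, fun f g => by positivity, ?_, ?_⟩
  · simp only [Finset.sum_const, Finset.card_univ, Fintype.card_fun, Fintype.card_fin,
      nsmul_eq_mul, hc]
    push_cast
    field_simp
  · intro x y a b
    have h1 : ∀ f : Fin 2 → A, ∑ g : Fin 2 → B, (if f x = a ∧ g y = b then c else 0)
        = if f x = a then (Fintype.card B : ℝ) * c else 0 := by
      intro f
      by_cases h : f x = a
      · simp only [h, true_and, if_true]
        exact count_fin2 y b c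
      · simp [h]
    rw [Finset.sum_congr rfl fun f _ => h1 f, count_fin2 x a _, hc]
    field_simp

lemma sum4_eq_zero {D : Fin 2 → Fin 2 → A → B → ℝ} (h0 : ∀ x y a b, 0 ≤ D x y a b)
    (h : ∑ x, ∑ y, ∑ a, ∑ b, D x y a b = 0) : ∀ x y a b, D x y a b = 0 := by
  intro x y a b
  have h1 := (Finset.sum_eq_zero_iff_of_nonneg (fun x _ =>
    Finset.sum_nonneg fun y _ => Finset.sum_nonneg fun a _ =>
      Finset.sum_nonneg fun b _ => h0 x y a b)).mp h x (Finset.mem_univ x)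
  have h2 := (Finset.sum_eq_zero_iff_of_nonneg (fun y _ =>
    Finset.sum_nonneg fun a _ => Finset.sum_nonneg fun b _ => h0 x y a b)).mp h1 y
    (Finset.mem_univ y)
  have h3 := (Finset.sum_eq_zero_iff_of_nonneg (fun a _ =>
    Finset.sum_nonneg fun b _ => h0 x y a b)).mp h2 a (Finset.mem_univ a)
  exact (Finset.sum_eq_zero_iff_of_nonneg (fun b _ => h0 x y a b)).mp h3 b (Finset.mem_univ b)

lemma total_sum_four {p : Fin 2 → Fin 2 → A → B → ℝ}
    (hp : ∀ x y, ∑ a, ∑ b, p x y a b = 1) :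
    ∑ x, ∑ y, ∑ a, ∑ b, p x y a b = 4 := by
  simp only [hp, Fin.sum_univ_two]
  norm_num

end Aux

/-- LP reformulation of the generalized robustness,
`1 + R_G(P) = (1/4)·min { uᵀP' : P' ∈ Cone(L), P' − P ≥ 0 }`. -/
theorem RG_linear_program {A B : Type*} [Fintype A] [Fintype B]
    [DecidableEq A] [DecidableEq B] [Nonempty A] [Nonempty B]
    (P : Fin 2 → Fin 2 → A → B → ℝ) (hP : IsBehavior P) (hNS : NoSignaling P) :
    1 + RG P = (1 / 4) * sInf {s : ℝ | ∃ P' : Fin 2 → Fin 2 → A → B → ℝ,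
      InConeL P' ∧ (∀ x y a b, P x y a b ≤ P' x y a b) ∧
      s = ∑ x, ∑ y, ∑ a, ∑ b, P' x y a b} := by
  classical
  have hA : (0:ℝ) < Fintype.card A := by exact_mod_cast Fintype.card_pos
  have hB : (0:ℝ) < Fintype.card B := by exact_mod_cast Fintype.card_pos
  set n : ℝ := (Fintype.card A : ℝ) * Fintype.card B with hn
  have hnpos : 0 < n := mul_pos hA hB
  set T : Set ℝ := {r : ℝ | 0 ≤ r ∧ ∃ Q : Fin 2 → Fin 2 → A → B → ℝ,
    IsBehavior Q ∧ NoSignaling Q ∧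
    IsLocal (fun x y a b => (1 + r)⁻¹ * (P x y a b + r * Q x y a b))} with hTdef
  have hRG : RG P = sInf T := rfl
  -- P entries are at most 1
  have hPle1 : ∀ x y a b, P x y a b ≤ 1 := by
    intro x y a b
    have h1 : P x y a b ≤ ∑ b', P x y a b' :=
      Finset.single_le_sum (fun b' _ => hP.1 x y a b') (Finset.mem_univ b)
    have h2 : ∑ b', P x y a b' ≤ ∑ a', ∑ b', P x y a' b' :=
      Finset.single_le_sum (f := fun a' => ∑ b', P x y a' b')
        (fun a' _ => Finset.sum_nonneg fun b' _ => hP.1 x y a' b') (Finset.mem_univ a)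
    calc P x y a b ≤ ∑ a', ∑ b', P x y a' b' := h1.trans h2
      _ = 1 := hP.2 x y
  -- T is nonempty
  have hTne : T.Nonempty := by
    refine ⟨n, hnpos.le, fun x y a b => n⁻¹ * ((1 + n) * n⁻¹ - P x y a b), ?_, ?_, ?_⟩
    · constructor
      · intro x y a b
        have h1 : (1:ℝ) ≤ (1 + n) * n⁻¹ := by
          rw [← div_eq_mul_inv, le_div_iff₀ hnpos]
          linarith
        have h2 := hPle1 x y a b
        have h3 : 0 ≤ (1 + n) * n⁻¹ - P x y a b := by linarith
        have h4 : 0 ≤ n⁻¹ := inv_nonneg.mpr hnpos.le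
        exact mul_nonneg h4 h3
      · intro x y
        simp only [← Finset.mul_sum, Finset.sum_sub_distrib, Finset.sum_const,
          Finset.card_univ, nsmul_eq_mul, hP.2 x y]
        have hA' : (Fintype.card A : ℝ) ≠ 0 := hA.ne'
        have hB' : (Fintype.card B : ℝ) ≠ 0 := hB.ne'
        have e : (Fintype.card B : ℝ) * ((Fintype.card A : ℝ) * n⁻¹) = 1 := by
          rw [hn]
          field_simp
        rw [e, mul_one]
        field_simp
        ring
    · constructor
      · intro x a y y'
        simp only [← Finset.mul_sum, Finset.sum_sub_distrib, Finset.sum_const,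
          Finset.card_univ, nsmul_eq_mul]
        rw [hNS.1 x a y y']
      · intro y b x x'
        simp only [← Finset.mul_sum, Finset.sum_sub_distrib, Finset.sum_const,
          Finset.card_univ, nsmul_eq_mul]
        rw [hNS.2 y b x x']
    · have he : (fun x y a b => (1 + n)⁻¹ *
          (P x y a b + n * (n⁻¹ * ((1 + n) * n⁻¹ - P x y a b))))
          = fun (_ : Fin 2) (_ : Fin 2) (_ : A) (_ : B) =>
            ((Fintype.card A : ℝ) * Fintype.card B)⁻¹ := by
        funext x y a b
        rw [← hn]
        have h1 : n ≠ 0 := hnpos.ne'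
        have h2 : (1 + n) ≠ 0 := by positivity
        field_simp
        ring
      rw [he]
      exact uniform_local
  have hTbdd : BddBelow T := ⟨0, fun r hr => hr.1⟩
  -- the LP set is the image of T under r ↦ 4 * (1 + r)
  have hImg : {s : ℝ | ∃ P' : Fin 2 → Fin 2 → A → B → ℝ,
      InConeL P' ∧ (∀ x y a b, P x y a b ≤ P' x y a b) ∧
      s = ∑ x, ∑ y, ∑ a, ∑ b, P' x y a b} = (fun r : ℝ => 4 * (1 + r)) '' T := by
    ext s
    constructor
    · rintro ⟨P', ⟨r', Q', hr'0, hQ'loc, hP'E⟩, hle, hsEq⟩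
      have hQ'b := hQ'loc.isBehavior
      have hQ'ns := hQ'loc.noSignaling
      have hP'sum : ∀ x y, ∑ a, ∑ b, P' x y a b = r' := by
        intro x y
        rw [hP'E]
        simp only [← Finset.mul_sum, hQ'b.2 x y, mul_one]
      have hs : s = 4 * r' := by
        rw [hsEq]
        simp only [hP'sum, Fin.sum_univ_two]
        ring
      have h4le : (4:ℝ) ≤ s := by
        have h1 : ∑ x, ∑ y, ∑ a, ∑ b, P x y a b ≤ ∑ x, ∑ y, ∑ a, ∑ b, P' x y a b := by
          gcongr with x _ y _ a _ b _
          exact hle x y a b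
        rw [hsEq]
        calc (4:ℝ) = ∑ x, ∑ y, ∑ a, ∑ b, P x y a b := (total_sum_four hP.2).symm
          _ ≤ _ := h1
      have hr'1 : (1:ℝ) ≤ r' := by
        rw [hs] at h4le; linarith
      refine ⟨r' - 1, ?_, by rw [hs]; ring⟩
      by_cases hr : r' = 1
      · -- boundary case : P itself is local
        have hzero : ∀ x y a b, P' x y a b - P x y a b = 0 := by
          apply sum4_eq_zero (fun x y a b => sub_nonneg.mpr (hle x y a b))
          have he : ∑ x, ∑ y, ∑ a, ∑ b, (P' x y a b - P x y a b) = s - 4 := by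
            simp only [Finset.sum_sub_distrib]
            rw [total_sum_four hP.2, ← hsEq]
          rw [he, hs, hr]; ring
        have hPQ' : P = Q' := by
          funext x y a b
          have h1 := hzero x y a b
          have h2 : P' x y a b = r' * Q' x y a b := by rw [hP'E]
          rw [hr, one_mul] at h2
          linarith
        refine ⟨by linarith, P, hP, hNS, ?_⟩
        have he : (fun x y a b => (1 + (r' - 1))⁻¹ *
            (P x y a b + (r' - 1) * P x y a b)) = P := by
          funext x y a b
          rw [hr]
          norm_num
        rw [he, hPQ']
        exact hQ'loc
      · have hrpos : 0 < r' - 1 := by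
          rcases lt_or_eq_of_le hr'1 with h | h
          · linarith
          · exact absurd h.symm hr
        refine ⟨by linarith, fun x y a b => (r' - 1)⁻¹ * (P' x y a b - P x y a b),
          ⟨?_, ?_⟩, ⟨?_, ?_⟩, ?_⟩
        · intro x y a b
          exact mul_nonneg (inv_nonneg.mpr hrpos.le) (sub_nonneg.mpr (hle x y a b))
        · intro x y
          simp only [← Finset.mul_sum, Finset.sum_sub_distrib, hP'sum x y, hP.2 x y]
          field_simp
        · intro x a y y'
          simp only [← Finset.mul_sum, Finset.sum_sub_distrib]
          have hm : ∀ y, ∑ b, P' x y a b = r' * ∑ b, Q' x y a b := by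
            intro y; rw [hP'E]; simp [Finset.mul_sum]
          rw [hm y, hm y', hQ'ns.1 x a y y', hNS.1 x a y y']
        · intro y b x x'
          simp only [← Finset.mul_sum, Finset.sum_sub_distrib]
          have hm : ∀ x, ∑ a, P' x y a b = r' * ∑ a, Q' x y a b := by
            intro x; rw [hP'E]; simp [Finset.mul_sum]
          rw [hm x, hm x', hQ'ns.2 y b x x', hNS.2 y b x x']
        · have he : (fun x y a b => (1 + (r' - 1))⁻¹ *
              (P x y a b + (r' - 1) * ((r' - 1)⁻¹ * (P' x y a b - P x y a b)))) = Q' := by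
            funext x y a b
            have h2 : P' x y a b = r' * Q' x y a b := by rw [hP'E]
            have e1 : (r' - 1) * ((r' - 1)⁻¹ * (P' x y a b - P x y a b))
                = P' x y a b - P x y a b := by
              rw [← mul_assoc, mul_inv_cancel₀ hrpos.ne', one_mul]
            rw [e1, h2]
            have e2 : P x y a b + (r' * Q' x y a b - P x y a b) = r' * Q' x y a b := by ring
            rw [e2, show (1 + (r' - 1)) = r' by ring, ← mul_assoc,
              inv_mul_cancel₀ (by linarith : r' ≠ 0), one_mul]
          rw [he]
          exact hQ'loc
    · rintro ⟨r, ⟨hr0, Q, hQb, hQns, hQloc⟩, rfl⟩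
      have h1r : (0:ℝ) < 1 + r := by linarith
      refine ⟨fun x y a b => P x y a b + r * Q x y a b,
        ⟨1 + r, fun x y a b => (1 + r)⁻¹ * (P x y a b + r * Q x y a b), h1r.le, hQloc, ?_⟩,
        fun x y a b => le_add_of_nonneg_right (mul_nonneg hr0 (hQb.1 x y a b)), ?_⟩
      · funext x y a b
        rw [← mul_assoc, mul_inv_cancel₀ h1r.ne', one_mul]
      · have hsum : ∀ x y, ∑ a, ∑ b, (P x y a b + r * Q x y a b) = 1 + r := by
          intro x y
          simp only [Finset.sum_add_distrib, ← Finset.mul_sum, hP.2 x y, hQb.2 x y, mul_one]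
        simp only [hsum, Fin.sum_univ_two]
        ring
  rw [hImg]
  have hmono : Monotone (fun r : ℝ => 4 * (1 + r)) := fun a b hab => by dsimp; linarith
  have hcont : ContinuousAt (fun r : ℝ => 4 * (1 + r)) (sInf T) :=
    (continuous_const.mul (continuous_const.add continuous_id)).continuousAt
  rw [← hmono.map_csInf_of_continuousAt hcont hTne hTbdd, hRG]
  ring
end

section
/- (LP reformulation of standard robustness) For a no-signaling behavior P, 1 + R_S(P) = (1/4) · min { uᵀ P' : P' ∈ Cone(L), P' − P ∈ Cone(L) }, where u is the all-ones vector. -/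
open Finset

namespace RSauxiliary
set_option linter.dupNamespace false
set_option linter.unusedSectionVars false

lemma sumf0 {A : Type*} [Fintype A] [DecidableEq A] (a : A) (K : A → A → ℝ) :
    ∑ f : Fin 2 → A, (if f 0 = a then K (f 0) (f 1) else 0) = ∑ a1, K a a1 := by
  rw [Fintype.sum_equiv (piFinTwoEquiv fun _ => A)
    (fun f => if f 0 = a then K (f 0) (f 1) else 0)
    (fun p => if p.1 = a then K p.1 p.2 else 0) (fun f => rfl)]
  rw [Fintype.sum_prod_type, Finset.sum_comm]
  simp [Finset.sum_ite_eq']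

lemma sumf1 {A : Type*} [Fintype A] [DecidableEq A] (a : A) (K : A → A → ℝ) :
    ∑ f : Fin 2 → A, (if f 1 = a then K (f 0) (f 1) else 0) = ∑ a0, K a0 a := by
  rw [Fintype.sum_equiv (piFinTwoEquiv fun _ => A)
    (fun f => if f 1 = a then K (f 0) (f 1) else 0)
    (fun p => if p.2 = a then K p.1 p.2 else 0) (fun f => rfl)]
  rw [Fintype.sum_prod_type]
  simp [Finset.sum_ite_eq']

section
variable {A B : Type*} [Fintype A] [Fintype B] [DecidableEq A] [DecidableEq B]

lemma L00 (a : A) (b : B) (K : A → A → B → B → ℝ) :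
    ∑ f : Fin 2 → A, ∑ g : Fin 2 → B,
      (if f 0 = a ∧ g 0 = b then K (f 0) (f 1) (g 0) (g 1) else 0)
      = ∑ a1, ∑ b1, K a a1 b b1 := by
  have h : ∀ f : Fin 2 → A, (∑ g : Fin 2 → B,
      (if f 0 = a ∧ g 0 = b then K (f 0) (f 1) (g 0) (g 1) else 0))
      = (if f 0 = a then (fun a0 a1 => ∑ b1, K a0 a1 b b1) (f 0) (f 1) else 0) := by
    intro f
    by_cases hf : f 0 = a
    · rw [if_pos hf]
      rw [Finset.sum_congr rfl (fun g _ => if_congr (and_iff_right hf) rfl rfl)]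
      exact sumf0 b (K (f 0) (f 1))
    · rw [if_neg hf]
      simp [hf]
  rw [Finset.sum_congr rfl (fun f _ => h f)]
  exact sumf0 a (fun a0 a1 => ∑ b1, K a0 a1 b b1)

lemma L01 (a : A) (b : B) (K : A → A → B → B → ℝ) :
    ∑ f : Fin 2 → A, ∑ g : Fin 2 → B,
      (if f 0 = a ∧ g 1 = b then K (f 0) (f 1) (g 0) (g 1) else 0)
      = ∑ a1, ∑ b0, K a a1 b0 b := by
  have h : ∀ f : Fin 2 → A, (∑ g : Fin 2 → B,
      (if f 0 = a ∧ g 1 = b then K (f 0) (f 1) (g 0) (g 1) else 0))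
      = (if f 0 = a then (fun a0 a1 => ∑ b0, K a0 a1 b0 b) (f 0) (f 1) else 0) := by
    intro f
    by_cases hf : f 0 = a
    · rw [if_pos hf]
      rw [Finset.sum_congr rfl (fun g _ => if_congr (and_iff_right hf) rfl rfl)]
      exact sumf1 b (K (f 0) (f 1))
    · rw [if_neg hf]
      simp [hf]
  rw [Finset.sum_congr rfl (fun f _ => h f)]
  exact sumf0 a (fun a0 a1 => ∑ b0, K a0 a1 b0 b)

lemma L10 (a : A) (b : B) (K : A → A → B → B → ℝ) :
    ∑ f : Fin 2 → A, ∑ g : Fin 2 → B,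
      (if f 1 = a ∧ g 0 = b then K (f 0) (f 1) (g 0) (g 1) else 0)
      = ∑ a0, ∑ b1, K a0 a b b1 := by
  have h : ∀ f : Fin 2 → A, (∑ g : Fin 2 → B,
      (if f 1 = a ∧ g 0 = b then K (f 0) (f 1) (g 0) (g 1) else 0))
      = (if f 1 = a then (fun a0 a1 => ∑ b1, K a0 a1 b b1) (f 0) (f 1) else 0) := by
    intro f
    by_cases hf : f 1 = a
    · rw [if_pos hf]
      rw [Finset.sum_congr rfl (fun g _ => if_congr (and_iff_right hf) rfl rfl)]
      exact sumf0 b (K (f 0) (f 1))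
    · rw [if_neg hf]
      simp [hf]
  rw [Finset.sum_congr rfl (fun f _ => h f)]
  exact sumf1 a (fun a0 a1 => ∑ b1, K a0 a1 b b1)

lemma L11 (a : A) (b : B) (K : A → A → B → B → ℝ) :
    ∑ f : Fin 2 → A, ∑ g : Fin 2 → B,
      (if f 1 = a ∧ g 1 = b then K (f 0) (f 1) (g 0) (g 1) else 0)
      = ∑ a0, ∑ b0, K a0 a b0 b := by
  have h : ∀ f : Fin 2 → A, (∑ g : Fin 2 → B,
      (if f 1 = a ∧ g 1 = b then K (f 0) (f 1) (g 0) (g 1) else 0))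
      = (if f 1 = a then (fun a0 a1 => ∑ b0, K a0 a1 b0 b) (f 0) (f 1) else 0) := by
    intro f
    by_cases hf : f 1 = a
    · rw [if_pos hf]
      rw [Finset.sum_congr rfl (fun g _ => if_congr (and_iff_right hf) rfl rfl)]
      exact sumf1 b (K (f 0) (f 1))
    · rw [if_neg hf]
      simp [hf]
  rw [Finset.sum_congr rfl (fun f _ => h f)]
  exact sumf1 a (fun a0 a1 => ∑ b0, K a0 a1 b0 b)

lemma sum_rep (l : (Fin 2 → A) → (Fin 2 → B) → ℝ) (x y : Fin 2) :
    ∑ a : A, ∑ b : B, ∑ f : Fin 2 → A, ∑ g : Fin 2 → B,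
      (if f x = a ∧ g y = b then l f g else 0) = ∑ f : Fin 2 → A, ∑ g : Fin 2 → B, l f g := by
  have inner : ∀ (f : Fin 2 → A) (g : Fin 2 → B),
      (∑ a : A, ∑ b : B, if f x = a ∧ g y = b then l f g else 0) = l f g := by
    intro f g
    simp [ite_and, Finset.sum_ite_eq]
  calc ∑ a : A, ∑ b : B, ∑ f : Fin 2 → A, ∑ g : Fin 2 → B,
        (if f x = a ∧ g y = b then l f g else 0)
      = ∑ a : A, ∑ f : Fin 2 → A, ∑ b : B, ∑ g : Fin 2 → B,
        (if f x = a ∧ g y = b then l f g else 0) :=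
        Finset.sum_congr rfl fun a _ => Finset.sum_comm
    _ = ∑ f : Fin 2 → A, ∑ a : A, ∑ b : B, ∑ g : Fin 2 → B,
        (if f x = a ∧ g y = b then l f g else 0) := Finset.sum_comm
    _ = ∑ f : Fin 2 → A, ∑ a : A, ∑ g : Fin 2 → B, ∑ b : B,
        (if f x = a ∧ g y = b then l f g else 0) :=
        Finset.sum_congr rfl fun f _ => Finset.sum_congr rfl fun a _ => Finset.sum_comm
    _ = ∑ f : Fin 2 → A, ∑ g : Fin 2 → B, ∑ a : A, ∑ b : B,
        (if f x = a ∧ g y = b then l f g else 0) :=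
        Finset.sum_congr rfl fun f _ => Finset.sum_comm
    _ = ∑ f : Fin 2 → A, ∑ g : Fin 2 → B, l f g :=
        Finset.sum_congr rfl fun f _ => Finset.sum_congr rfl fun g _ => inner f g

end

section
variable {A B : Type*} [Fintype A] [Fintype B] [DecidableEq A] [DecidableEq B]
variable (P : Fin 2 → Fin 2 → A → B → ℝ)

def margA (x : Fin 2) (a : A) : ℝ := ∑ b, P x 0 a b
def margB (y : Fin 2) (b : B) : ℝ := ∑ a, P 0 y a b

def Mfun (a0 a1 : A) (b0 b1 : B) : ℝ :=
  P 0 0 a0 b0 * margA P 1 a1 * margB P 1 b1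
  + P 0 1 a0 b1 * margA P 1 a1 * margB P 0 b0
  + P 1 0 a1 b0 * margA P 0 a0 * margB P 1 b1
  + P 1 1 a1 b1 * margA P 0 a0 * margB P 0 b0
  - 3 * margA P 0 a0 * margA P 1 a1 * margB P 0 b0 * margB P 1 b1

lemma decomposition (hP : IsBehavior P) (hNS : NoSignaling P) :
    ∀ x y a b, P x y a b = ∑ f : Fin 2 → A, ∑ g : Fin 2 → B,
      if f x = a ∧ g y = b then Mfun P (f 0) (f 1) (g 0) (g 1) else 0 := by
  have hA : ∀ x y a, ∑ b, P x y a b = margA P x a := fun x y a => hNS.1 x a y 0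
  have hB : ∀ x y b, ∑ a, P x y a b = margB P y b := fun x y b => hNS.2 y b x 0
  have hAn : ∀ x, ∑ a, margA P x a = 1 := fun x => hP.2 x 0
  have hBn : ∀ y, ∑ b, margB P y b = 1 := fun y => by
    rw [show (∑ b, margB P y b) = ∑ b, ∑ a, P 0 y a b from rfl, Finset.sum_comm]
    exact hP.2 0 y
  intro x y a b
  fin_cases x <;> fin_cases y
  · show P 0 0 a b = ∑ f : Fin 2 → A, ∑ g : Fin 2 → B,
      if f 0 = a ∧ g 0 = b then Mfun P (f 0) (f 1) (g 0) (g 1) else 0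
    rw [L00 a b (Mfun P)]
    simp only [Mfun]
    simp only [Finset.sum_add_distrib, Finset.sum_sub_distrib, ← Finset.sum_mul, ← Finset.mul_sum]
    rw [hAn 1, hBn 1, hA 0 1 a, hB 1 0 b, hP.2 1 1]
    ring
  · show P 0 1 a b = ∑ f : Fin 2 → A, ∑ g : Fin 2 → B,
      if f 0 = a ∧ g 1 = b then Mfun P (f 0) (f 1) (g 0) (g 1) else 0
    rw [L01 a b (Mfun P)]
    simp only [Mfun]
    simp only [Finset.sum_add_distrib, Finset.sum_sub_distrib, ← Finset.sum_mul, ← Finset.mul_sum]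
    rw [hAn 1, hBn 0, hA 0 0 a, hB 1 1 b, hP.2 1 0]
    ring
  · show P 1 0 a b = ∑ f : Fin 2 → A, ∑ g : Fin 2 → B,
      if f 1 = a ∧ g 0 = b then Mfun P (f 0) (f 1) (g 0) (g 1) else 0
    rw [L10 a b (Mfun P)]
    simp only [Mfun]
    simp only [Finset.sum_add_distrib, Finset.sum_sub_distrib, ← Finset.sum_mul, ← Finset.mul_sum]
    rw [hAn 0, hBn 1, hA 1 1 a, hB 0 0 b, hP.2 0 1]
    ring
  · show P 1 1 a b = ∑ f : Fin 2 → A, ∑ g : Fin 2 → B,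
      if f 1 = a ∧ g 1 = b then Mfun P (f 0) (f 1) (g 0) (g 1) else 0
    rw [L11 a b (Mfun P)]
    simp only [Mfun]
    simp only [Finset.sum_add_distrib, Finset.sum_sub_distrib, ← Finset.sum_mul, ← Finset.mul_sum]
    rw [hAn 0, hBn 0, hA 1 0 a, hB 0 1 b, hP.2 0 0]
    ring

variable {P}

lemma local_sum {Q : Fin 2 → Fin 2 → A → B → ℝ} (hQ : IsLocal Q) (x y : Fin 2) :
    ∑ a, ∑ b, Q x y a b = 1 := by
  obtain ⟨l, hpos, hsum, hrep⟩ := hQ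
  calc ∑ a, ∑ b, Q x y a b
      = ∑ a : A, ∑ b : B, ∑ f : Fin 2 → A, ∑ g : Fin 2 → B,
        (if f x = a ∧ g y = b then l f g else 0) :=
        Finset.sum_congr rfl fun a _ => Finset.sum_congr rfl fun b _ => hrep x y a b
    _ = ∑ f : Fin 2 → A, ∑ g : Fin 2 → B, l f g := sum_rep l x y
    _ = 1 := hsum

lemma local_total {Q : Fin 2 → Fin 2 → A → B → ℝ} (hQ : IsLocal Q) :
    ∑ x, ∑ y, ∑ a, ∑ b, Q x y a b = 4 := by
  have h := local_sum hQ
  calc ∑ x, ∑ y, ∑ a, ∑ b, Q x y a b = ∑ x : Fin 2, ∑ y : Fin 2, (1 : ℝ) :=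
      Finset.sum_congr rfl fun x _ => Finset.sum_congr rfl fun y _ => h x y
    _ = 4 := by norm_num

lemma behavior_total (hP : IsBehavior P) :
    ∑ x, ∑ y, ∑ a, ∑ b, P x y a b = 4 := by
  calc ∑ x, ∑ y, ∑ a, ∑ b, P x y a b = ∑ x : Fin 2, ∑ y : Fin 2, (1 : ℝ) :=
      Finset.sum_congr rfl fun x _ => Finset.sum_congr rfl fun y _ => hP.2 x y
    _ = 4 := by norm_num

lemma S1_nonempty [Nonempty A] [Nonempty B] (hP : IsBehavior P) (hNS : NoSignaling P) :
    ∃ r : ℝ, 0 ≤ r ∧ ∃ Q : Fin 2 → Fin 2 → A → B → ℝ, IsLocal Q ∧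
      IsLocal (fun x y a b => (1 + r)⁻¹ * (P x y a b + r * Q x y a b)) := by
  classical
  set lam : (Fin 2 → A) → (Fin 2 → B) → ℝ :=
    fun f g => Mfun P (f 0) (f 1) (g 0) (g 1) with hlamdef
  have hdec : ∀ x y a b, P x y a b = ∑ f : Fin 2 → A, ∑ g : Fin 2 → B,
      (if f x = a ∧ g y = b then lam f g else 0) := decomposition P hP hNS
  have hlam1 : ∑ f : Fin 2 → A, ∑ g : Fin 2 → B, lam f g = 1 := by
    have h00 := hP.2 0 0
    rw [Finset.sum_congr rfl (fun a _ => Finset.sum_congr rfl (fun b _ => hdec 0 0 a b))] at h00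
    rwa [sum_rep] at h00
  set N : ℝ := (Fintype.card (Fin 2 → A) : ℝ) * (Fintype.card (Fin 2 → B) : ℝ) with hNdef
  have hNpos : 0 < N := by
    apply mul_pos <;> exact_mod_cast Fintype.card_pos
  have hc : ∀ c : ℝ, ∑ _f : Fin 2 → A, ∑ _g : Fin 2 → B, c = N * c := by
    intro c
    simp [Finset.sum_const, Finset.card_univ, nsmul_eq_mul, hNdef]
    ring
  set S : ℝ := ∑ f : Fin 2 → A, ∑ g : Fin 2 → B, |lam f g| with hSdef
  have hS0 : 0 ≤ S := Finset.sum_nonneg fun f _ => Finset.sum_nonneg fun g _ => abs_nonneg _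
  have hSb : ∀ (f : Fin 2 → A) (g : Fin 2 → B), |lam f g| ≤ S := by
    intro f g
    calc |lam f g| ≤ ∑ g' : Fin 2 → B, |lam f g'| :=
          Finset.single_le_sum (f := fun g' => |lam f g'|)
            (fun i _ => abs_nonneg _) (Finset.mem_univ g)
      _ ≤ S := Finset.single_le_sum (f := fun f' => ∑ g' : Fin 2 → B, |lam f' g'|)
          (fun i _ => Finset.sum_nonneg fun j _ => abs_nonneg _) (Finset.mem_univ f)
  set r : ℝ := N * S with hrdef
  have hr0 : 0 ≤ r := mul_nonneg hNpos.le hS0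
  have hrN : r * N⁻¹ = S := by
    rw [hrdef, mul_comm N S, mul_assoc, mul_inv_cancel₀ hNpos.ne', mul_one]
  have h1r : (0:ℝ) < 1 + r := by linarith
  refine ⟨r, hr0,
    (fun x y a b => ∑ f : Fin 2 → A, ∑ g : Fin 2 → B, (if f x = a ∧ g y = b then N⁻¹ else 0)),
    ⟨fun _ _ => N⁻¹, fun _ _ => inv_nonneg.2 hNpos.le, ?_, fun x y a b => rfl⟩,
    ⟨fun f g => (1 + r)⁻¹ * (lam f g + r * N⁻¹), ?_, ?_, ?_⟩⟩
  · rw [hc N⁻¹, mul_inv_cancel₀ hNpos.ne']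
  · intro f g
    have : -lam f g ≤ S := le_trans (neg_le_abs _) (hSb f g)
    have h2 : 0 ≤ lam f g + r * N⁻¹ := by rw [hrN]; linarith
    exact mul_nonneg (inv_nonneg.2 h1r.le) h2
  · have : ∑ f : Fin 2 → A, ∑ g : Fin 2 → B, (lam f g + r * N⁻¹) = 1 + r := by
      simp only [Finset.sum_add_distrib]
      rw [hlam1, hc (r * N⁻¹), ← mul_assoc, mul_comm N r, mul_assoc,
        mul_inv_cancel₀ hNpos.ne', mul_one]
    simp only [← Finset.mul_sum]
    rw [this, inv_mul_cancel₀ h1r.ne']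
  · intro x y a b
    show (1 + r)⁻¹ * (P x y a b +
        r * ∑ f : Fin 2 → A, ∑ g : Fin 2 → B, (if f x = a ∧ g y = b then N⁻¹ else 0)) = _
    rw [hdec x y a b, mul_add, ← mul_assoc]
    simp only [Finset.mul_sum]
    simp only [← Finset.sum_add_distrib]
    refine Finset.sum_congr rfl fun f _ => Finset.sum_congr rfl fun g _ => ?_
    by_cases h : f x = a ∧ g y = b
    · simp [h]; ring
    · simp [h]

end

end RSauxiliary

/-- LP reformulation of the standard robustness,
`1 + R_S(P) = (1/4)·min { uᵀP' : P' ∈ Cone(L), P' − P ∈ Cone(L) }`. -/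
theorem RS_linear_program {A B : Type*} [Fintype A] [Fintype B]
    [DecidableEq A] [DecidableEq B] [Nonempty A] [Nonempty B]
    (P : Fin 2 → Fin 2 → A → B → ℝ) (hP : IsBehavior P) (hNS : NoSignaling P) :
    1 + RS P = (1 / 4) * sInf {s : ℝ | ∃ P' : Fin 2 → Fin 2 → A → B → ℝ,
      InConeL P' ∧ InConeL (fun x y a b => P' x y a b - P x y a b) ∧
      s = ∑ x, ∑ y, ∑ a, ∑ b, P' x y a b} := by
  classical
  have hne : Set.Nonempty {r : ℝ | 0 ≤ r ∧ ∃ Q : Fin 2 → Fin 2 → A → B → ℝ, IsLocal Q ∧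
      IsLocal (fun x y a b => (1 + r)⁻¹ * (P x y a b + r * Q x y a b))} := by
    obtain ⟨r, hr0, Q, hQ, hL⟩ := RSauxiliary.S1_nonempty (P := P) hP hNS
    exact ⟨r, hr0, Q, hQ, hL⟩
  have hbdd : BddBelow {r : ℝ | 0 ≤ r ∧ ∃ Q : Fin 2 → Fin 2 → A → B → ℝ, IsLocal Q ∧
      IsLocal (fun x y a b => (1 + r)⁻¹ * (P x y a b + r * Q x y a b))} :=
    ⟨0, fun r hr => hr.1⟩
  have himg : {s : ℝ | ∃ P' : Fin 2 → Fin 2 → A → B → ℝ,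
      InConeL P' ∧ InConeL (fun x y a b => P' x y a b - P x y a b) ∧
      s = ∑ x, ∑ y, ∑ a, ∑ b, P' x y a b}
      = (fun r : ℝ => 4 * (1 + r)) '' {r : ℝ | 0 ≤ r ∧
        ∃ Q : Fin 2 → Fin 2 → A → B → ℝ, IsLocal Q ∧
        IsLocal (fun x y a b => (1 + r)⁻¹ * (P x y a b + r * Q x y a b))} := by
    ext s
    constructor
    · rintro ⟨P', ⟨r1, Q1, hr1, hQ1, hP'⟩, ⟨r2, Q2, hr2, hQ2, hD⟩, hs⟩
      have hP'pt : ∀ x y a b, P' x y a b = r1 * Q1 x y a b := fun x y a b => by rw [hP']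
      have hDpt : ∀ x y a b, P' x y a b - P x y a b = r2 * Q2 x y a b := fun x y a b =>
        congrFun (congrFun (congrFun (congrFun hD x) y) a) b
      have h1 : ∑ x, ∑ y, ∑ a, ∑ b, P' x y a b = 4 * r1 := by
        calc ∑ x, ∑ y, ∑ a, ∑ b, P' x y a b
            = ∑ x, ∑ y, ∑ a, ∑ b, r1 * Q1 x y a b :=
              Finset.sum_congr rfl fun x _ => Finset.sum_congr rfl fun y _ =>
                Finset.sum_congr rfl fun a _ => Finset.sum_congr rfl fun b _ => hP'pt x y a b
          _ = r1 * ∑ x, ∑ y, ∑ a, ∑ b, Q1 x y a b := by simp only [← Finset.mul_sum]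
          _ = 4 * r1 := by rw [RSauxiliary.local_total hQ1]; ring
      have h2 : ∑ x, ∑ y, ∑ a, ∑ b, (P' x y a b - P x y a b) = 4 * r2 := by
        calc ∑ x, ∑ y, ∑ a, ∑ b, (P' x y a b - P x y a b)
            = ∑ x, ∑ y, ∑ a, ∑ b, r2 * Q2 x y a b :=
              Finset.sum_congr rfl fun x _ => Finset.sum_congr rfl fun y _ =>
                Finset.sum_congr rfl fun a _ => Finset.sum_congr rfl fun b _ => hDpt x y a b
          _ = r2 * ∑ x, ∑ y, ∑ a, ∑ b, Q2 x y a b := by simp only [← Finset.mul_sum]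
          _ = 4 * r2 := by rw [RSauxiliary.local_total hQ2]; ring
      have h3 : ∑ x, ∑ y, ∑ a, ∑ b, (P' x y a b - P x y a b)
          = (∑ x, ∑ y, ∑ a, ∑ b, P' x y a b) - ∑ x, ∑ y, ∑ a, ∑ b, P x y a b := by
        simp only [Finset.sum_sub_distrib]
      rw [h2, h1, RSauxiliary.behavior_total hP] at h3
      have hr12 : r1 = 1 + r2 := by linarith
      refine ⟨r2, ⟨hr2, Q2, hQ2, ?_⟩, ?_⟩
      · have hfun : (fun x y a b => (1 + r2)⁻¹ * (P x y a b + r2 * Q2 x y a b)) = Q1 := by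
          funext x y a b
          have e1 : P x y a b + r2 * Q2 x y a b = P' x y a b := by
            have := hDpt x y a b; linarith
          rw [e1, hP'pt x y a b, hr12,
            inv_mul_cancel_left₀ (by linarith : (1:ℝ) + r2 ≠ 0)]
        rw [hfun]; exact hQ1
      · show 4 * (1 + r2) = s
        rw [hs, h1, hr12]
    · rintro ⟨r, ⟨hr, Q, hQ, hL⟩, rfl⟩
      refine ⟨fun x y a b => P x y a b + r * Q x y a b,
        ⟨1 + r, (fun x y a b => (1 + r)⁻¹ * (P x y a b + r * Q x y a b)),
          by linarith, hL, ?_⟩, ⟨r, Q, hr, hQ, ?_⟩, ?_⟩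
      · funext x y a b
        rw [mul_inv_cancel_left₀ (by linarith : (1:ℝ) + r ≠ 0)]
      · funext x y a b
        show P x y a b + r * Q x y a b - P x y a b = r * Q x y a b
        ring
      · have : ∑ x, ∑ y, ∑ a, ∑ b, (P x y a b + r * Q x y a b)
            = (∑ x, ∑ y, ∑ a, ∑ b, P x y a b) + r * ∑ x, ∑ y, ∑ a, ∑ b, Q x y a b := by
          simp only [Finset.sum_add_distrib, Finset.mul_sum]
        rw [this, RSauxiliary.behavior_total hP, RSauxiliary.local_total hQ]
        ring
  rw [himg]
  rw [← Monotone.map_csInf_of_continuousAt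
    (f := fun r : ℝ => 4 * (1 + r))
    ((continuous_const.mul (continuous_const.add continuous_id)).continuousAt)
    (fun a b h => by dsimp only; linarith) hne hbdd]
  show 1 + RS P = (1/4) * (4 * (1 + sInf _))
  rw [RS]
  ring
end

section
/- For the maximal-violation behavior of a Bell inequality, the standard robustness equals (ν − 1)/2, where ν = max over Bell functionals S of |S·P| / max_{P_l ∈ L} |S·P_l|: that is, if P is a no-signaling behavior with standard robustness r_s (the minimum attained), then ν(P) = 2 r_s + 1. Prove the inequality ν(P) ≤ 2 R_S(P) + 1. -/
open Finset

/-- Pairing of a Bell functional `S` with a behavior `P`. -/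
def dot {A B : Type*} [Fintype A] [Fintype B]
    (S P : Fin 2 → Fin 2 → A → B → ℝ) : ℝ :=
  ∑ x, ∑ y, ∑ a, ∑ b, S x y a b * P x y a b

/-- The local bound `B_S = max_{P_l ∈ L} |S · P_l|` of a Bell functional. -/
noncomputable def localBound {A B : Type*} [Fintype A] [Fintype B]
    [DecidableEq A] [DecidableEq B] (S : Fin 2 → Fin 2 → A → B → ℝ) : ℝ :=
  sSup {w : ℝ | ∃ Pl : Fin 2 → Fin 2 → A → B → ℝ, IsLocal Pl ∧ w = |dot S Pl|}

lemma isLocal_mem_unit {A B : Type*} [Fintype A] [Fintype B] [DecidableEq A] [DecidableEq B]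
    {p : Fin 2 → Fin 2 → A → B → ℝ} (hp : IsLocal p) :
    ∀ x y a b, 0 ≤ p x y a b ∧ p x y a b ≤ 1 := by
  obtain ⟨l, hl0, hl1, hlp⟩ := hp
  intro x y a b
  rw [hlp]
  constructor
  · apply Finset.sum_nonneg; intro f _
    apply Finset.sum_nonneg; intro g _
    split
    · exact hl0 f g
    · exact le_rfl
  · rw [← hl1]
    apply Finset.sum_le_sum; intro f _
    apply Finset.sum_le_sum; intro g _
    split
    · exact le_rfl
    · exact hl0 f g

lemma dot_abs_le {A B : Type*} [Fintype A] [Fintype B] [DecidableEq A] [DecidableEq B]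
    (S : Fin 2 → Fin 2 → A → B → ℝ) {p : Fin 2 → Fin 2 → A → B → ℝ} (hp : IsLocal p) :
    |dot S p| ≤ ∑ x, ∑ y, ∑ a, ∑ b, |S x y a b| := by
  unfold dot
  refine le_trans (Finset.abs_sum_le_sum_abs _ _) (Finset.sum_le_sum fun x _ => ?_)
  refine le_trans (Finset.abs_sum_le_sum_abs _ _) (Finset.sum_le_sum fun y _ => ?_)
  refine le_trans (Finset.abs_sum_le_sum_abs _ _) (Finset.sum_le_sum fun a _ => ?_)
  refine le_trans (Finset.abs_sum_le_sum_abs _ _) (Finset.sum_le_sum fun b _ => ?_)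
  rw [abs_mul]
  have h := isLocal_mem_unit hp x y a b
  calc |S x y a b| * |p x y a b| ≤ |S x y a b| * 1 := by
        apply mul_le_mul_of_nonneg_left _ (abs_nonneg _)
        rw [abs_le]; exact ⟨le_trans (by norm_num) h.1, h.2⟩
    _ = |S x y a b| := mul_one _

lemma bddAbove_localSet {A B : Type*} [Fintype A] [Fintype B] [DecidableEq A] [DecidableEq B]
    (S : Fin 2 → Fin 2 → A → B → ℝ) :
    BddAbove {w : ℝ | ∃ Pl : Fin 2 → Fin 2 → A → B → ℝ, IsLocal Pl ∧ w = |dot S Pl|} := by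
  refine ⟨∑ x, ∑ y, ∑ a, ∑ b, |S x y a b|, fun w hw => ?_⟩
  obtain ⟨Pl, hPl, rfl⟩ := hw
  exact dot_abs_le S hPl

lemma le_localBound {A B : Type*} [Fintype A] [Fintype B] [DecidableEq A] [DecidableEq B]
    (S : Fin 2 → Fin 2 → A → B → ℝ) {p : Fin 2 → Fin 2 → A → B → ℝ} (hp : IsLocal p) :
    |dot S p| ≤ localBound S :=
  le_csSup (bddAbove_localSet S) ⟨p, hp, rfl⟩

lemma dot_lin {A B : Type*} [Fintype A] [Fintype B]
    (S P Q : Fin 2 → Fin 2 → A → B → ℝ) (c r : ℝ) :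
    dot S (fun x y a b => c * (P x y a b + r * Q x y a b))
      = c * (dot S P + r * dot S Q) := by
  simp only [dot, Finset.mul_sum, ← Finset.sum_add_distrib]
  refine Finset.sum_congr rfl fun x _ => Finset.sum_congr rfl fun y _ =>
    Finset.sum_congr rfl fun a _ => Finset.sum_congr rfl fun b _ => ?_
  ring

/-- the maximal Bell violation ratio is bounded by `2 R_S(P) + 1`:
`ν(P) = sup_S |S·P| / B_S ≤ 2 R_S(P) + 1` (assuming the minimum defining
`R_S(P)` is attained). -/
theorem bell_violation_le_standard_robustness {A B : Type*} [Fintype A] [Fintype B]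
    [DecidableEq A] [DecidableEq B] [Nonempty A] [Nonempty B]
    (P : Fin 2 → Fin 2 → A → B → ℝ) (hP : IsBehavior P) (hNS : NoSignaling P)
    (hatt : 0 ≤ RS P ∧ ∃ Q : Fin 2 → Fin 2 → A → B → ℝ, IsLocal Q ∧
      IsLocal (fun x y a b => (1 + RS P)⁻¹ * (P x y a b + RS P * Q x y a b))) :
    (∀ S : Fin 2 → Fin 2 → A → B → ℝ, 0 < localBound S →
      |dot S P| ≤ (2 * RS P + 1) * localBound S) ∧
    sSup {v : ℝ | ∃ S : Fin 2 → Fin 2 → A → B → ℝ, 0 < localBound S ∧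
      v = |dot S P| / localBound S} ≤ 2 * RS P + 1 := by
  obtain ⟨hr0, Q, hQ, hM⟩ := hatt
  set r := RS P with hr
  have h1r : (1 : ℝ) + r ≠ 0 := by positivity
  have key : ∀ S : Fin 2 → Fin 2 → A → B → ℝ, 0 < localBound S →
      |dot S P| ≤ (2 * r + 1) * localBound S := by
    intro S hS
    have hMle := le_localBound S hM
    have hQle := le_localBound S hQ
    have hlin := dot_lin S P Q (1 + r)⁻¹ r
    have hPeq : dot S P = (1 + r) * dot S (fun x y a b =>
        (1 + r)⁻¹ * (P x y a b + r * Q x y a b)) - r * dot S Q := by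
      rw [hlin]; field_simp; ring
    rw [hPeq]
    have habs : |(1 + r) * dot S (fun x y a b =>
        (1 + r)⁻¹ * (P x y a b + r * Q x y a b)) - r * dot S Q|
        ≤ (1 + r) * |dot S (fun x y a b =>
        (1 + r)⁻¹ * (P x y a b + r * Q x y a b))| + r * |dot S Q| := by
      refine le_trans (abs_sub _ _) ?_
      rw [abs_mul, abs_mul, abs_of_nonneg (by positivity : (0:ℝ) ≤ 1 + r),
        abs_of_nonneg hr0]
    refine le_trans habs ?_
    nlinarith [abs_nonneg (dot S Q), abs_nonneg (dot S (fun x y a b =>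
        (1 + r)⁻¹ * (P x y a b + r * Q x y a b)))]
  refine ⟨key, Real.sSup_le ?_ (by linarith)⟩
  rintro v ⟨S, hS, rfl⟩
  rw [div_le_iff₀ hS]
  calc |dot S P| ≤ (2 * r + 1) * localBound S := key S hS
    _ = (2 * r + 1) * localBound S := rfl
end
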